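/- Let m be a Borel probability measure on ℝ and let T₁, T₂ : ℝ → ℝ be strictly monotone increasing functions with Measure.map T₁ m = Measure.map T₂ m. If the CDF of the common pushforward measure Measure.map T₁ m is injective, then T₁ = T₂. (Uniqueness of the strictly increasing transformation carrying a given noise distribution to a given outcome distribution; this underlies the identifiability of counterfactuals from the observational distribution.) -/
import Mathlib


open MeasureTheory

/-- The cumulative distribution function of a Borel measure on ℝ:
`F_m(x) = m((-∞, x])`. -/
noncomputable def cdfOf (m : Measure ℝ) (x : ℝ) : ℝ := (m (Set.Iic x)).toReal

/-- Uniqueness of the strictly increasing transformation carrying a given noise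
distribution to a given outcome distribution: if `T₁, T₂` are strictly increasing,
push `m` to the same measure, and the CDF of that common pushforward is injective,
then `T₁ = T₂`. -/
theorem strictMono_transport_unique (m : Measure ℝ) [IsProbabilityMeasure m]
    (T₁ T₂ : ℝ → ℝ) (h₁ : StrictMono T₁) (h₂ : StrictMono T₂)
    (hmap : Measure.map T₁ m = Measure.map T₂ m)
    (hinj : Function.Injective (cdfOf (Measure.map T₁ m))) :
    T₁ = T₂ := by
  have key : ∀ (T : ℝ → ℝ), StrictMono T → ∀ x,
      cdfOf (Measure.map T m) (T x) = cdfOf m x := by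
    intro T hT x
    unfold cdfOf
    rw [Measure.map_apply hT.monotone.measurable measurableSet_Iic]
    have : T ⁻¹' Set.Iic (T x) = Set.Iic x := by
      ext y; simp [hT.le_iff_le]
    rw [this]
  funext x
  apply hinj
  rw [key T₁ h₁ x, hmap, key T₂ h₂ x]
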